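/- (Optimality of the Wasserstein coupling) Let E be a complete separable (Polish) metric space with its Borel σ-algebra and let μ ≠ ν be probability measures on E. Let (μ−ν)⁺ and (μ−ν)⁻ denote the positive and negative parts in the Jordan–Hahn decomposition of the signed measure μ − ν, and set μ∧ν = μ − (μ−ν)⁺. Define the probability measure π on E × E by π(dx,dy) = (μ∧ν)(dx) δ_x(dy) + (μ−ν)⁺(dx)(μ−ν)⁻(dy) / (μ−ν)⁻(E) (the first term is the image of μ∧ν under the diagonal map x ↦ (x,x)). Then π is a coupling of μ and ν, and π({(x,y) : x ≠ y}) = sup_{A measurable} |μ(A) − ν(A)|; in particular π attains the infimum of π'({x ≠ y}) over all couplings π' of μ and ν. -/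

import Mathlib

open MeasureTheory

/-- **Optimality of the Wasserstein coupling.** Let `μ ≠ ν` be probability measures on a
Polish space, let `(μ−ν)⁺`, `(μ−ν)⁻` be the Jordan–Hahn positive and negative parts of the
signed measure `μ − ν`, and let `μ∧ν = μ − (μ−ν)⁺`. Then
`π(dx,dy) = (μ∧ν)(dx) δ_x(dy) + (μ−ν)⁺(dx)(μ−ν)⁻(dy)/(μ−ν)⁻(E)` is a coupling of `μ` and
`ν` satisfying `π({x ≠ y}) = sup_A |μ(A) − ν(A)|`, and it minimizes `π'({x ≠ y})` over all
couplings `π'` of `μ` and `ν`. -/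
theorem wasserstein_coupling_optimal {E : Type*} [MetricSpace E] [CompleteSpace E]
    [TopologicalSpace.SeparableSpace E] [MeasurableSpace E] [BorelSpace E]
    (μ ν : Measure E) [IsProbabilityMeasure μ] [IsProbabilityMeasure ν] (hμν : μ ≠ ν) :
    let η := μ.toSignedMeasure - ν.toSignedMeasure
    let ηp := η.toJordanDecomposition.posPart
    let ηm := η.toJordanDecomposition.negPart
    let π : Measure (E × E) :=
      (μ - ηp).map (fun x => (x, x)) + (ηm Set.univ)⁻¹ • (ηp.prod ηm)
    π.map Prod.fst = μ ∧ π.map Prod.snd = ν ∧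
      (π {z : E × E | z.1 ≠ z.2} =
        ⨆ (A : Set E) (_ : MeasurableSet A), max (μ A - ν A) (ν A - μ A)) ∧
      ∀ π' : Measure (E × E), π'.map Prod.fst = μ → π'.map Prod.snd = ν →
        π {z : E × E | z.1 ≠ z.2} ≤ π' {z : E × E | z.1 ≠ z.2} := by
  intro η ηp ηm π
  haveI : SecondCountableTopology E := UniformSpace.secondCountable_of_separable E
  haveI hpfin : IsFiniteMeasure ηp := η.toJordanDecomposition.posPart_finite
  haveI hmfin : IsFiniteMeasure ηm := η.toJordanDecomposition.negPart_finite
  -- the key pointwise identity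
  have hkey : ∀ A : Set E, MeasurableSet A → μ A + ηm A = ν A + ηp A := by
    intro A hA
    have h1 : η A = (μ A).toReal - (ν A).toReal :=
      Measure.toSignedMeasure_sub_apply hA
    have h2 : η A = (ηp A).toReal - (ηm A).toReal := by
      conv_lhs => rw [← η.toSignedMeasure_toJordanDecomposition]
      exact Measure.toSignedMeasure_sub_apply hA
    have h3 : (μ A).toReal + (ηm A).toReal = (ν A).toReal + (ηp A).toReal := by
      linarith [h1, h2]
    rw [← ENNReal.toReal_add (measure_ne_top _ _) (measure_ne_top _ _),
      ← ENNReal.toReal_add (measure_ne_top _ _) (measure_ne_top _ _)] at h3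
    exact (ENNReal.toReal_eq_toReal_iff' (by finiteness) (by finiteness)).mp h3
  -- mutual singularity
  obtain ⟨t, ht, hpt, hmt⟩ := η.toJordanDecomposition.mutuallySingular
  -- ηp ≤ μ
  have hple : ηp ≤ μ := by
    refine Measure.le_iff.mpr fun A hA => ?_
    have h1 : ηp (A ∩ t) = 0 := measure_mono_null Set.inter_subset_right hpt
    have h2 : ηm (A ∩ tᶜ) = 0 := measure_mono_null Set.inter_subset_right hmt
    have h3 : ηp (A ∩ tᶜ) ≤ μ (A ∩ tᶜ) := by
      have := hkey (A ∩ tᶜ) (hA.inter ht.compl)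
      rw [h2, add_zero] at this
      calc ηp (A ∩ tᶜ) ≤ ν (A ∩ tᶜ) + ηp (A ∩ tᶜ) := le_add_self
        _ = μ (A ∩ tᶜ) := this.symm
    calc ηp A ≤ ηp (A ∩ tᶜ) + ηp (A \ tᶜ) := measure_le_inter_add_diff _ _ _
      _ = ηp (A ∩ tᶜ) := by
          rw [show A \ tᶜ = A ∩ t by simp [Set.diff_eq], h1, add_zero]
      _ ≤ μ (A ∩ tᶜ) := h3
      _ ≤ μ A := measure_mono Set.inter_subset_left
  -- equal total masses
  have htot : ηp Set.univ = ηm Set.univ := by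
    have h := hkey Set.univ MeasurableSet.univ
    have h1 : μ Set.univ = 1 := measure_univ
    have h2 : ν Set.univ = 1 := measure_univ
    rw [h1, h2] at h
    exact (ENNReal.add_right_inj ENNReal.one_ne_top).mp h.symm
  have hm0 : ηm Set.univ ≠ 0 := by
    intro h0
    have hp0 : ηp Set.univ = 0 := htot.trans h0
    apply hμν
    ext A hA
    have := hkey A hA
    rw [measure_mono_null (Set.subset_univ A) h0,
      measure_mono_null (Set.subset_univ A) hp0, add_zero, add_zero] at this
    exact this
  have hmtop : ηm Set.univ ≠ ⊤ := measure_ne_top _ _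
  have hdiagm : Measurable fun x : E => (x, x) := measurable_id.prodMk measurable_id
  have hNmeas : MeasurableSet {z : E × E | z.1 ≠ z.2} := by
    have : MeasurableSet (Set.diagonal E) := isClosed_diagonal.measurableSet
    simpa [Set.diagonal, Set.compl_setOf] using this.compl
  -- first marginal
  have hfst : π.map Prod.fst = μ := by
    show ((μ - ηp).map (fun x => (x, x)) + (ηm Set.univ)⁻¹ • ηp.prod ηm).map Prod.fst = μ
    rw [Measure.map_add _ _ measurable_fst, Measure.map_smul,
      Measure.map_map measurable_fst hdiagm, Measure.map_fst_prod]
    have : (Prod.fst ∘ fun x : E => (x, x)) = id := rfl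
    rw [this, Measure.map_id, smul_smul, ENNReal.inv_mul_cancel hm0 hmtop, one_smul,
      Measure.sub_add_cancel_of_le hple]
  -- second marginal
  have hsnd : π.map Prod.snd = ν := by
    show ((μ - ηp).map (fun x => (x, x)) + (ηm Set.univ)⁻¹ • ηp.prod ηm).map Prod.snd = ν
    rw [Measure.map_add _ _ measurable_snd, Measure.map_smul,
      Measure.map_map measurable_snd hdiagm, Measure.map_snd_prod]
    have h1 : (Prod.snd ∘ fun x : E => (x, x)) = id := rfl
    rw [h1, Measure.map_id, ← htot, smul_smul,
      ENNReal.inv_mul_cancel (htot ▸ hm0) (measure_ne_top _ _), one_smul]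
    ext A hA
    rw [Measure.add_apply, Measure.sub_apply hA hple]
    have h2 := hkey A hA
    have h3 : ηp A ≤ μ A := Measure.le_iff.mp hple A hA
    rw [ENNReal.sub_add_eq_add_sub h3 (measure_ne_top _ _), h2,
      ENNReal.add_sub_cancel_right (measure_ne_top _ _)]
  -- value of π on the off-diagonal set
  have hπN : π {z : E × E | z.1 ≠ z.2} = ηp Set.univ := by
    show ((μ - ηp).map (fun x => (x, x)) + (ηm Set.univ)⁻¹ • ηp.prod ηm)
        {z : E × E | z.1 ≠ z.2} = ηp Set.univ
    rw [Measure.add_apply, Measure.smul_apply, Measure.map_apply hdiagm hNmeas]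
    have h1 : ((fun x : E => (x, x)) ⁻¹' {z : E × E | z.1 ≠ z.2}) = ∅ := by
      ext x; simp
    rw [h1, measure_empty, zero_add]
    have hdiag0 : (ηp.prod ηm) (Set.diagonal E) = 0 := by
      have hsub : Set.diagonal E ⊆ (t ×ˢ t) ∪ (tᶜ ×ˢ tᶜ) := by
        rintro ⟨x, y⟩ hxy
        simp only [Set.mem_diagonal_iff] at hxy
        subst hxy
        by_cases hx : x ∈ t
        · exact Or.inl ⟨hx, hx⟩
        · exact Or.inr ⟨hx, hx⟩
      refine le_antisymm ?_ zero_le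
      calc (ηp.prod ηm) (Set.diagonal E) ≤ (ηp.prod ηm) ((t ×ˢ t) ∪ (tᶜ ×ˢ tᶜ)) :=
            measure_mono hsub
        _ ≤ (ηp.prod ηm) (t ×ˢ t) + (ηp.prod ηm) (tᶜ ×ˢ tᶜ) := measure_union_le _ _
        _ = ηp t * ηm t + ηp tᶜ * ηm tᶜ := by rw [Measure.prod_prod, Measure.prod_prod]
        _ = 0 := by rw [hpt, hmt, zero_mul, mul_zero, add_zero]
    have hcompl : {z : E × E | z.1 ≠ z.2} = (Set.diagonal E)ᶜ := by
      ext z; simp [Set.diagonal]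
    rw [hcompl, measure_compl isClosed_diagonal.measurableSet (measure_ne_top _ _), hdiag0,
      tsub_zero, ← Set.univ_prod_univ, Measure.prod_prod, smul_eq_mul, mul_comm (ηp Set.univ),
      ← mul_assoc, ENNReal.inv_mul_cancel hm0 hmtop, one_mul]
  -- facts about tᶜ
  have hptc : ηp tᶜ = ηp Set.univ := by
    rw [← measure_add_measure_compl ht, hpt, zero_add]
  have hμνtc : μ tᶜ = ν tᶜ + ηp tᶜ := by
    have := hkey tᶜ ht.compl
    rwa [hmt, add_zero] at this
  refine ⟨hfst, hsnd, ?_, ?_⟩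
  · -- supremum formula
    rw [hπN]
    apply le_antisymm
    · have h1 : μ tᶜ - ν tᶜ = ηp Set.univ := by
        rw [hμνtc, ENNReal.add_sub_cancel_left (measure_ne_top _ _), hptc]
      calc ηp Set.univ = μ tᶜ - ν tᶜ := h1.symm
        _ ≤ max (μ tᶜ - ν tᶜ) (ν tᶜ - μ tᶜ) := le_max_left _ _
        _ ≤ ⨆ (A : Set E) (_ : MeasurableSet A), max (μ A - ν A) (ν A - μ A) := by
            exact le_iSup₂ (f := fun A (_ : MeasurableSet A) => max (μ A - ν A) (ν A - μ A))
              tᶜ ht.compl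
    · refine iSup₂_le fun A hA => max_le ?_ ?_
      · rw [tsub_le_iff_right]
        calc μ A ≤ μ A + ηm A := le_self_add
          _ = ν A + ηp A := hkey A hA
          _ ≤ ν A + ηp Set.univ := by gcongr; exact Set.subset_univ A
          _ = ηp Set.univ + ν A := add_comm _ _
      · rw [tsub_le_iff_right]
        calc ν A ≤ ν A + ηp A := le_self_add
          _ = μ A + ηm A := (hkey A hA).symm
          _ ≤ μ A + ηm Set.univ := by gcongr; exact Set.subset_univ A
          _ = ηp Set.univ + μ A := by rw [htot, add_comm]
  · -- optimality
    intro π' h1 h2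
    rw [hπN]
    have hμ' : μ tᶜ = π' (Prod.fst ⁻¹' tᶜ) := by
      rw [← h1, Measure.map_apply measurable_fst ht.compl]
    have hν' : ν tᶜ = π' (Prod.snd ⁻¹' tᶜ) := by
      rw [← h2, Measure.map_apply measurable_snd ht.compl]
    have hsub : Prod.fst ⁻¹' tᶜ ⊆ (Prod.snd ⁻¹' tᶜ) ∪ {z : E × E | z.1 ≠ z.2} := by
      rintro ⟨x, y⟩ hx
      by_cases hxy : x = y
      · exact Or.inl (by simpa [← hxy] using hx)
      · exact Or.inr hxy
    have hb : μ tᶜ ≤ ν tᶜ + π' {z : E × E | z.1 ≠ z.2} := by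
      rw [hμ', hν']
      exact (measure_mono hsub).trans (measure_union_le _ _)
    rw [hμνtc, hptc] at hb
    exact (ENNReal.add_le_add_iff_left (measure_ne_top _ _)).mp hb
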